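/- Let U ⊆ ℝ⁴ be open and let u : U → ℝ be a smooth solution of the equation u₁₃ + u₂₄ + x₁(u₁₁u₂₂ − u₁₂²) = 0 on U. Let λ ∈ ℝ satisfy x₄ ≠ λ for all x ∈ U, and define the vector fields X = ∂₄ + x₁(u₁₁∂₂ − u₁₂∂₁) + (x₁/(x₄−λ))∂₁ and Y = ∂₃ + x₁(u₂₂∂₁ − u₁₂∂₂) − (x₁/(x₄−λ))∂₂. Then for every x ∈ U, the vector [X,Y](x) lies in the linear span of X(x) and Y(x). -/

import Mathlib

open scoped ContDiff

set_option maxHeartbeats 1000000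
noncomputable section

/-- `pd i u x` is the partial derivative `∂u/∂xᵢ` at `x`. -/
def pd {n : ℕ} (i : Fin n) (u : (Fin n → ℝ) → ℝ) (x : Fin n → ℝ) : ℝ :=
  fderiv ℝ u x (Pi.single i 1)

/-- `pd2 i j u x` is the second partial derivative `∂²u/∂xᵢ∂xⱼ` at `x`. -/
def pd2 {n : ℕ} (i j : Fin n) (u : (Fin n → ℝ) → ℝ) (x : Fin n → ℝ) : ℝ :=
  pd i (pd j u) x

/-- Lie bracket of vector fields : `[X,Y](x) = DY(x)(X(x)) − DX(x)(Y(x))`. -/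
def lieBr {n : ℕ} (X Y : (Fin n → ℝ) → (Fin n → ℝ)) (x : Fin n → ℝ) : Fin n → ℝ :=
  fderiv ℝ Y x (X x) - fderiv ℝ X x (Y x)

lemma hle1 : (1 : WithTop ℕ∞) ≤ ∞ := by decide
lemma hle2 : (2 : WithTop ℕ∞) ≤ ∞ := by decide

lemma contDiffOn_pd {n : ℕ} {U : Set (Fin n → ℝ)} (hU : IsOpen U)
    {f : (Fin n → ℝ) → ℝ} (hf : ContDiffOn ℝ ∞ f U) (i : Fin n) :
    ContDiffOn ℝ ∞ (pd i f) U := by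
  have h1 : ContDiffOn ℝ ∞ (fderiv ℝ f) U :=
    hf.fderiv_of_isOpen hU (le_of_eq rfl)
  exact h1.clm_apply contDiffOn_const

lemma pd_congr {n : ℕ} {f g : (Fin n → ℝ) → ℝ} {x : Fin n → ℝ}
    (h : f =ᶠ[nhds x] g) (i : Fin n) : pd i f x = pd i g x := by
  unfold pd; rw [h.fderiv_eq]

lemma pd_comm {n : ℕ} {U : Set (Fin n → ℝ)} (hU : IsOpen U)
    {f : (Fin n → ℝ) → ℝ} (hf : ContDiffOn ℝ ∞ f U) {x : Fin n → ℝ} (hx : x ∈ U)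
    (i j : Fin n) : pd i (pd j f) x = pd j (pd i f) x := by
  have hc : ContDiffAt ℝ ∞ f x := hf.contDiffAt (hU.mem_nhds hx)
  have hsym := hc.isSymmSndFDerivAt (by rw [minSmoothness_of_isRCLikeNormedField]; exact hle2)
  have hdf : DifferentiableAt ℝ (fderiv ℝ f) x :=
    (hc.fderiv_right (m := 1) (by decide)).differentiableAt one_ne_zero
  have key : ∀ (k l : Fin n), pd k (pd l f) x
      = fderiv ℝ (fderiv ℝ f) x (Pi.single k 1) (Pi.single l 1) := by
    intro k l
    have h2 : pd l f = fun y => (fderiv ℝ f y) (Pi.single l 1) := rfl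
    rw [pd, h2, fderiv_clm_apply hdf (differentiableAt_const _)]
    simp
  rw [key, key, hsym.eq]

lemma pd_comm_inner {n : ℕ} {U : Set (Fin n → ℝ)} (hU : IsOpen U)
    {f : (Fin n → ℝ) → ℝ} (hf : ContDiffOn ℝ ∞ f U) {x : Fin n → ℝ} (hx : x ∈ U)
    (i j k : Fin n) : pd i (pd j (pd k f)) x = pd i (pd k (pd j f)) x := by
  refine pd_congr ?_ i
  filter_upwards [hU.mem_nhds hx] with y hy
  exact pd_comm hU hf hy j k

lemma clm_sum (L : (Fin 4 → ℝ) →L[ℝ] ℝ) (v : Fin 4 → ℝ) :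
    L v = v 0 * L (Pi.single 0 1) + v 1 * L (Pi.single 1 1)
      + v 2 * L (Pi.single 2 1) + v 3 * L (Pi.single 3 1) := by
  have hv : v = v 0 • (Pi.single 0 1 : Fin 4 → ℝ) + v 1 • (Pi.single 1 1 : Fin 4 → ℝ)
      + v 2 • (Pi.single 2 1 : Fin 4 → ℝ) + v 3 • (Pi.single 3 1 : Fin 4 → ℝ) := by
    funext j; fin_cases j <;> simp
  conv_lhs => rw [hv]
  simp [smul_eq_mul]

/-- Lax pair (Frobenius integrability) for the deformed second heavenly
equation with `f = x₁`. -/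
theorem statement10 (U : Set (Fin 4 → ℝ)) (hU : IsOpen U)
    (u : (Fin 4 → ℝ) → ℝ) (hu : ContDiffOn ℝ ∞ u U)
    (hsol : ∀ x ∈ U,
      pd2 0 2 u x + pd2 1 3 u x
        + x 0 * (pd2 0 0 u x * pd2 1 1 u x - (pd2 0 1 u x) ^ 2) = 0)
    (lam : ℝ) (hlam : ∀ x ∈ U, x 3 ≠ lam)
    (X Y : (Fin 4 → ℝ) → (Fin 4 → ℝ))
    (hX : X = fun x => (Pi.single 3 1 : Fin 4 → ℝ)
        + (x 0 * pd2 0 0 u x) • (Pi.single 1 1 : Fin 4 → ℝ)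
        - (x 0 * pd2 0 1 u x) • (Pi.single 0 1 : Fin 4 → ℝ)
        + (x 0 / (x 3 - lam)) • (Pi.single 0 1 : Fin 4 → ℝ))
    (hY : Y = fun x => (Pi.single 2 1 : Fin 4 → ℝ)
        + (x 0 * pd2 1 1 u x) • (Pi.single 0 1 : Fin 4 → ℝ)
        - (x 0 * pd2 0 1 u x) • (Pi.single 1 1 : Fin 4 → ℝ)
        - (x 0 / (x 3 - lam)) • (Pi.single 1 1 : Fin 4 → ℝ)) :
    ∀ x ∈ U, lieBr X Y x ∈ Submodule.span ℝ {X x, Y x} := by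
  intro x hx
  have hxmem : U ∈ nhds x := hU.mem_nhds hx
  have hw : x 3 - lam ≠ 0 := sub_ne_zero.2 (hlam x hx)
  -- smoothness and differentiability of second partials
  have h2 : ∀ i j : Fin 4, ContDiffOn ℝ ∞ (pd2 i j u) U := fun i j =>
    contDiffOn_pd hU (contDiffOn_pd hU hu j) i
  have hdiff : ∀ i j : Fin 4, DifferentiableAt ℝ (pd2 i j u) x := fun i j =>
    ((h2 i j).contDiffAt hxmem).differentiableAt (by decide)
  set P0 : (Fin 4 → ℝ) →L[ℝ] ℝ := ContinuousLinearMap.proj 0 with hP0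
  set P3 : (Fin 4 → ℝ) →L[ℝ] ℝ := ContinuousLinearMap.proj 3 with hP3
  set D00 := fderiv ℝ (pd2 0 0 u) x with hD00
  set D01 := fderiv ℝ (pd2 0 1 u) x with hD01
  set D11 := fderiv ℝ (pd2 1 1 u) x with hD11
  set D02 := fderiv ℝ (pd2 0 2 u) x with hD02
  set D13 := fderiv ℝ (pd2 1 3 u) x with hD13
  have hd00 : HasFDerivAt (pd2 0 0 u) D00 x := (hdiff 0 0).hasFDerivAt
  have hd01 : HasFDerivAt (pd2 0 1 u) D01 x := (hdiff 0 1).hasFDerivAt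
  have hd11 : HasFDerivAt (pd2 1 1 u) D11 x := (hdiff 1 1).hasFDerivAt
  have hd02 : HasFDerivAt (pd2 0 2 u) D02 x := (hdiff 0 2).hasFDerivAt
  have hd13 : HasFDerivAt (pd2 1 3 u) D13 x := (hdiff 1 3).hasFDerivAt
  have hc0 : HasFDerivAt (fun y : Fin 4 → ℝ => y 0) P0 x := hasFDerivAt_apply 0 x
  have hinv : HasFDerivAt (fun y : Fin 4 → ℝ => (y 3 - lam)⁻¹)
      ((-((x 3 - lam) ^ 2)⁻¹) • P3) x := by
    have h3 : HasFDerivAt (fun y : Fin 4 → ℝ => y 3 - lam) P3 x :=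
      (hasFDerivAt_apply 3 x).sub_const lam
    exact (hasDerivAt_inv hw).comp_hasFDerivAt x h3
  have hq : HasFDerivAt (fun y : Fin 4 → ℝ => y 0 / (y 3 - lam))
      ((x 0) • ((-((x 3 - lam) ^ 2)⁻¹) • P3) + (x 3 - lam)⁻¹ • P0) x := by
    have he : (fun y : Fin 4 → ℝ => y 0 / (y 3 - lam))
        = fun y => y 0 * (y 3 - lam)⁻¹ := by funext y; rw [div_eq_mul_inv]
    rw [he]; exact hc0.mul hinv
  have h00 : HasFDerivAt (fun y : Fin 4 → ℝ => y 0 * pd2 0 0 u y)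
      ((x 0) • D00 + pd2 0 0 u x • P0) x := hc0.mul hd00
  have h01 : HasFDerivAt (fun y : Fin 4 → ℝ => y 0 * pd2 0 1 u y)
      ((x 0) • D01 + pd2 0 1 u x • P0) x := hc0.mul hd01
  have h11 : HasFDerivAt (fun y : Fin 4 → ℝ => y 0 * pd2 1 1 u y)
      ((x 0) • D11 + pd2 1 1 u x • P0) x := hc0.mul hd11
  -- derivatives of the vector fields
  have hfX : fderiv ℝ X x =
      ((0 + ((x 0) • D00 + pd2 0 0 u x • P0).smulRight (Pi.single 1 1))
        - ((x 0) • D01 + pd2 0 1 u x • P0).smulRight (Pi.single 0 1))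
        + ((x 0) • ((-((x 3 - lam) ^ 2)⁻¹) • P3) + (x 3 - lam)⁻¹ • P0).smulRight
            (Pi.single 0 1) := by
    rw [hX]
    exact ((((hasFDerivAt_const _ _).add (h00.smul_const _)).sub
      (h01.smul_const _)).add (hq.smul_const _)).fderiv
  have hfY : fderiv ℝ Y x =
      ((0 + ((x 0) • D11 + pd2 1 1 u x • P0).smulRight (Pi.single 0 1))
        - ((x 0) • D01 + pd2 0 1 u x • P0).smulRight (Pi.single 1 1))
        - ((x 0) • ((-((x 3 - lam) ^ 2)⁻¹) • P3) + (x 3 - lam)⁻¹ • P0).smulRight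
            (Pi.single 1 1) := by
    rw [hY]
    exact ((((hasFDerivAt_const _ _).add (h11.smul_const _)).sub
      (h01.smul_const _)).sub (hq.smul_const _)).fderiv
  -- component values of X x and Y x
  have hXx0 : X x 0 = x 0 / (x 3 - lam) - x 0 * pd2 0 1 u x := by
    rw [hX]; simp [Pi.single_apply]; try ring
  have hXx1 : X x 1 = x 0 * pd2 0 0 u x := by
    rw [hX]; simp [Pi.single_apply]
  have hXx2 : X x 2 = 0 := by rw [hX]; simp [Pi.single_apply]
  have hXx3 : X x 3 = 1 := by rw [hX]; simp [Pi.single_apply]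
  have hYx0 : Y x 0 = x 0 * pd2 1 1 u x := by
    rw [hY]; simp [Pi.single_apply]
  have hYx1 : Y x 1 = -(x 0 * pd2 0 1 u x) - x 0 / (x 3 - lam) := by
    rw [hY]; simp [Pi.single_apply]; try ring
  have hYx2 : Y x 2 = 1 := by rw [hY]; simp [Pi.single_apply]
  have hYx3 : Y x 3 = 0 := by rw [hY]; simp [Pi.single_apply]
  -- identification of clm values with pd expressions
  have e00 : ∀ i : Fin 4, D00 (Pi.single i 1) = pd i (pd 0 (pd 0 u)) x := fun _ => rfl
  have e01 : ∀ i : Fin 4, D01 (Pi.single i 1) = pd i (pd 0 (pd 1 u)) x := fun _ => rfl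
  have e11 : ∀ i : Fin 4, D11 (Pi.single i 1) = pd i (pd 1 (pd 1 u)) x := fun _ => rfl
  have e02 : ∀ i : Fin 4, D02 (Pi.single i 1) = pd i (pd 0 (pd 2 u)) x := fun _ => rfl
  have e13 : ∀ i : Fin 4, D13 (Pi.single i 1) = pd i (pd 1 (pd 3 u)) x := fun _ => rfl
  -- symmetry facts
  have hu0 := contDiffOn_pd hU hu 0
  have hu1 := contDiffOn_pd hU hu 1
  have hu2 := contDiffOn_pd hU hu 2
  have F1 : pd 1 (pd 0 (pd 2 u)) x = pd 2 (pd 0 (pd 1 u)) x := by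
    rw [pd_comm hU hu2 hx 1 0, pd_comm_inner hU hu hx 0 1 2, pd_comm hU hu1 hx 0 2]
  have F2 : pd 1 (pd 1 (pd 3 u)) x = pd 3 (pd 1 (pd 1 u)) x := by
    rw [pd_comm_inner hU hu hx 1 1 3, pd_comm hU hu1 hx 1 3]
  have F3 : pd 0 (pd 0 (pd 2 u)) x = pd 2 (pd 0 (pd 0 u)) x := by
    rw [pd_comm_inner hU hu hx 0 0 2, pd_comm hU hu0 hx 0 2]
  have F4 : pd 0 (pd 1 (pd 3 u)) x = pd 3 (pd 0 (pd 1 u)) x := by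
    rw [pd_comm_inner hU hu hx 0 1 3, pd_comm hU hu1 hx 0 3]
  have F5 : pd 0 (pd 1 (pd 1 u)) x = pd 1 (pd 0 (pd 1 u)) x := pd_comm hU hu1 hx 0 1
  have F6 : pd 1 (pd 0 (pd 0 u)) x = pd 0 (pd 0 (pd 1 u)) x := by
    rw [pd_comm hU hu0 hx 1 0, pd_comm_inner hU hu hx 0 1 0]
  -- differentiated PDE
  have hFd : HasFDerivAt (fun y : Fin 4 → ℝ => pd2 0 2 u y + pd2 1 3 u y
        + y 0 * (pd2 0 0 u y * pd2 1 1 u y - pd2 0 1 u y * pd2 0 1 u y))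
      ((D02 + D13) + ((x 0) • ((pd2 0 0 u x • D11 + pd2 1 1 u x • D00)
          - (pd2 0 1 u x • D01 + pd2 0 1 u x • D01))
        + (pd2 0 0 u x * pd2 1 1 u x - pd2 0 1 u x * pd2 0 1 u x) • P0)) x :=
    (hd02.add hd13).add (hc0.mul ((hd00.mul hd11).sub (hd01.mul hd01)))
  have hFzero : ((D02 + D13) + ((x 0) • ((pd2 0 0 u x • D11 + pd2 1 1 u x • D00)
          - (pd2 0 1 u x • D01 + pd2 0 1 u x • D01))
        + (pd2 0 0 u x * pd2 1 1 u x - pd2 0 1 u x * pd2 0 1 u x) • P0)) = 0 := by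
    rw [← hFd.fderiv]
    have hev : (fun y : Fin 4 → ℝ => pd2 0 2 u y + pd2 1 3 u y
        + y 0 * (pd2 0 0 u y * pd2 1 1 u y - pd2 0 1 u y * pd2 0 1 u y))
        =ᶠ[nhds x] (fun _ => (0 : ℝ)) := by
      filter_upwards [hxmem] with y hy
      have h := hsol y hy
      rw [pow_two] at h
      exact h
    rw [hev.fderiv_eq]
    exact fderiv_const_apply 0
  have hpde0 := congrArg (fun L : (Fin 4 → ℝ) →L[ℝ] ℝ => L (Pi.single 0 1)) hFzero
  have hpde1 := congrArg (fun L : (Fin 4 → ℝ) →L[ℝ] ℝ => L (Pi.single 1 1)) hFzero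
  simp [ContinuousLinearMap.add_apply, ContinuousLinearMap.sub_apply,
    ContinuousLinearMap.smul_apply, ContinuousLinearMap.zero_apply, smul_eq_mul,
    e00, e01, e11, e02, e13, hP0, ContinuousLinearMap.proj_apply,
    Pi.single_apply] at hpde0 hpde1
  -- the bracket vanishes
  have hzero : lieBr X Y x = 0 := by
    unfold lieBr
    rw [hfX, hfY]
    funext j
    have hsum00 := clm_sum D00 (Y x)
    have hsum01X := clm_sum D01 (X x)
    have hsum01Y := clm_sum D01 (Y x)
    have hsum11 := clm_sum D11 (X x)
    have bigsimp := 0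
    fin_cases j
    · simp +decide only [Pi.sub_apply, Pi.zero_apply, ContinuousLinearMap.add_apply,
        ContinuousLinearMap.sub_apply, ContinuousLinearMap.smulRight_apply,
        ContinuousLinearMap.smul_apply, ContinuousLinearMap.zero_apply,
        Pi.add_apply, Pi.smul_apply, smul_eq_mul, hP0, hP3,
        ContinuousLinearMap.proj_apply, Pi.single_apply, if_true, if_false]
      rw [hsum11, hsum01Y]
      simp +decide only [e01, e11, hXx0, hXx1, hXx2, hXx3, hYx0, hYx1, hYx2, hYx3, if_true, if_false]
      rw [F5, ← F2, ← F1, ← F6]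
      simp only [show ((x 3 - lam) ^ 2)⁻¹ = (x 3 - lam)⁻¹ * (x 3 - lam)⁻¹ by rw [sq, mul_inv]]
      linear_combination (x 0) * hpde1
    · simp +decide only [Pi.sub_apply, Pi.zero_apply, ContinuousLinearMap.add_apply,
        ContinuousLinearMap.sub_apply, ContinuousLinearMap.smulRight_apply,
        ContinuousLinearMap.smul_apply, ContinuousLinearMap.zero_apply,
        Pi.add_apply, Pi.smul_apply, smul_eq_mul, hP0, hP3,
        ContinuousLinearMap.proj_apply, Pi.single_apply, if_true, if_false]
      rw [hsum01X, hsum00]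
      simp +decide only [e00, e01, hXx0, hXx1, hXx2, hXx3, hYx0, hYx1, hYx2, hYx3, if_true, if_false]
      rw [← F4, ← F3, F6, ← F5]
      simp only [show ((x 3 - lam) ^ 2)⁻¹ = (x 3 - lam)⁻¹ * (x 3 - lam)⁻¹ by rw [sq, mul_inv]]
      linear_combination (-(x 0)) * hpde0
    · simp +decide only [Pi.sub_apply, Pi.zero_apply, ContinuousLinearMap.add_apply,
        ContinuousLinearMap.sub_apply, ContinuousLinearMap.smulRight_apply,
        ContinuousLinearMap.smul_apply, ContinuousLinearMap.zero_apply,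
        Pi.add_apply, Pi.smul_apply, smul_eq_mul, hP0, hP3,
        ContinuousLinearMap.proj_apply, Pi.single_apply, if_true, if_false]
      norm_num
    · simp +decide only [Pi.sub_apply, Pi.zero_apply, ContinuousLinearMap.add_apply,
        ContinuousLinearMap.sub_apply, ContinuousLinearMap.smulRight_apply,
        ContinuousLinearMap.smul_apply, ContinuousLinearMap.zero_apply,
        Pi.add_apply, Pi.smul_apply, smul_eq_mul, hP0, hP3,
        ContinuousLinearMap.proj_apply, Pi.single_apply, if_true, if_false]
      norm_num
  rw [hzero]
  exact Submodule.zero_mem _
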